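/- Let (X, μ) be a probability space and T : X → X a measure-preserving map, and let f ∈ L²(X, μ). Then for all natural numbers p ≥ 1, n ≥ 1 and 0 ≤ k < p, the Birkhoff averages satisfy ‖A_{np+k} f‖₂ ≤ ‖A_p f‖₂ + ‖f‖₂ / n. -/

import Mathlib

open MeasureTheory Finset
open ENNReal

/-- The `n`-th Birkhoff average of `f` along `T`: `Aₙ f = (1/n) ∑_{i<n} f ∘ T^i`. -/
noncomputable def birkhoffAvg {X : Type*} (T : X → X) (f : X → ℝ) (n : ℕ) (x : X) : ℝ :=
  (n : ℝ)⁻¹ * ∑ i ∈ Finset.range n, f (T^[i] x)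

lemma birkhoffSum_mul {X : Type*} (T : X → X) (f : X → ℝ) (n p : ℕ) (x : X) :
    birkhoffSum T f (n * p) x = ∑ j ∈ Finset.range n, birkhoffSum T f p (T^[j * p] x) := by
  induction n with
  | zero => simp [birkhoffSum]
  | succ n ih =>
    rw [Nat.succ_mul, birkhoffSum_add, ih, Finset.sum_range_succ]

theorem birkhoff_average_L2_bound {X : Type*} [MeasurableSpace X]
    (μ : Measure X) [IsProbabilityMeasure μ]
    (T : X → X) (hT : MeasurePreserving T μ μ)
    (f : X → ℝ) (hf : MemLp f 2 μ)
    (p n k : ℕ) (hp : 1 ≤ p) (hn : 1 ≤ n) (hk : k < p) :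
    eLpNorm (birkhoffAvg T f (n * p + k)) 2 μ ≤
      eLpNorm (birkhoffAvg T f p) 2 μ + eLpNorm f 2 μ / n := by
  set N : ℕ := n * p + k with hN
  have hNpos : 0 < N := by positivity
  -- Birkhoff average of f at p
  set A : X → ℝ := birkhoffAvg T f p with hA
  have hAmem : MemLp A 2 μ := by
    apply MemLp.const_mul
    · have := memLp_finset_sum' (Finset.range p) (μ := μ) (p := 2)
        (f := fun i => f ∘ T^[i]) (fun i _ => hf.comp_measurePreserving (hT.iterate i))
      simpa [Function.comp, Finset.sum_fn] using this
  -- decomposition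
  have key : ∀ x, birkhoffAvg T f N x
      = (N : ℝ)⁻¹ * ((p : ℝ) * ∑ j ∈ Finset.range n, A (T^[j * p] x)
        + ∑ i ∈ Finset.range k, f (T^[n * p + i] x)) := by
    intro x
    have h1 : ∑ i ∈ Finset.range N, f (T^[i] x) = birkhoffSum T f N x := rfl
    rw [birkhoffAvg, h1, birkhoffSum_add, birkhoffSum_mul]
    congr 1
    congr 1
    · rw [Finset.mul_sum]
      refine Finset.sum_congr rfl fun j _ => ?_
      rw [hA, birkhoffAvg, ← mul_assoc, mul_inv_cancel₀ (by positivity), one_mul]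
      rfl
    · rw [birkhoffSum]
      refine Finset.sum_congr rfl fun i _ => ?_
      rw [← Function.iterate_add_apply, Nat.add_comm]
  -- as functions
  have keyf : birkhoffAvg T f N
      = fun x => (N : ℝ)⁻¹ * ((p : ℝ) * ∑ j ∈ Finset.range n, A (T^[j * p] x)
        + ∑ i ∈ Finset.range k, f (T^[n * p + i] x)) := funext key
  set S : X → ℝ := fun x => ∑ j ∈ Finset.range n, A (T^[j * p] x) with hS
  set R : X → ℝ := fun x => ∑ i ∈ Finset.range k, f (T^[n * p + i] x) with hR
  have hSmem : MemLp S 2 μ := by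
    have := memLp_finset_sum' (Finset.range n) (μ := μ) (p := 2)
      (f := fun j => A ∘ T^[j * p]) (fun j _ => hAmem.comp_measurePreserving (hT.iterate (j * p)))
    simpa [Function.comp, Finset.sum_fn] using this
  have hRmem : MemLp R 2 μ := by
    have := memLp_finset_sum' (Finset.range k) (μ := μ) (p := 2)
      (f := fun i => f ∘ T^[n * p + i])
      (fun i _ => hf.comp_measurePreserving (hT.iterate (n * p + i)))
    simpa [Function.comp, Finset.sum_fn] using this
  -- norm bounds on S and R
  have hSbound : eLpNorm S 2 μ ≤ (n : ℝ≥0∞) * eLpNorm A 2 μ := by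
    have h1 : eLpNorm S 2 μ ≤ ∑ j ∈ Finset.range n, eLpNorm (A ∘ T^[j * p]) 2 μ := by
      have := eLpNorm_sum_le (μ := μ) (p := 2) (s := Finset.range n)
        (f := fun j => A ∘ T^[j * p])
        (fun j _ => (hAmem.comp_measurePreserving (hT.iterate (j * p))).1) one_le_two
      refine le_trans (le_of_eq ?_) this
      congr 1
      ext x
      simp [hS, Function.comp, Finset.sum_apply]
    refine h1.trans (le_of_eq ?_)
    rw [Finset.sum_congr rfl
      (fun j _ => eLpNorm_comp_measurePreserving hAmem.1 (hT.iterate (j * p)))]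
    simp [mul_comm]
  have hRbound : eLpNorm R 2 μ ≤ (k : ℝ≥0∞) * eLpNorm f 2 μ := by
    have h1 : eLpNorm R 2 μ ≤ ∑ i ∈ Finset.range k, eLpNorm (f ∘ T^[n * p + i]) 2 μ := by
      have := eLpNorm_sum_le (μ := μ) (p := 2) (s := Finset.range k)
        (f := fun i => f ∘ T^[n * p + i])
        (fun i _ => (hf.comp_measurePreserving (hT.iterate (n * p + i))).1) one_le_two
      refine le_trans (le_of_eq ?_) this
      congr 1
      ext x
      simp [hR, Function.comp, Finset.sum_apply]
    refine h1.trans (le_of_eq ?_)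
    rw [Finset.sum_congr rfl
      (fun i _ => eLpNorm_comp_measurePreserving hf.1 (hT.iterate (n * p + i)))]
    simp [mul_comm]
  -- main computation
  have hmain : eLpNorm (birkhoffAvg T f N) 2 μ
      ≤ (N : ℝ≥0∞)⁻¹ * ((p : ℝ≥0∞) * eLpNorm S 2 μ + eLpNorm R 2 μ) := by
    rw [keyf]
    have heq : (fun x => (N : ℝ)⁻¹ * ((p : ℝ) * S x + R x))
        = ((N : ℝ)⁻¹) • (fun x => (p : ℝ) * S x + R x) := rfl
    rw [heq, eLpNorm_const_smul]
    have hc : (‖((N : ℝ)⁻¹)‖₊ : ℝ≥0∞) = (N : ℝ≥0∞)⁻¹ := by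
      rw [nnnorm_inv, ENNReal.coe_inv (by simp [hNpos.ne'])]
      norm_cast
    rw [← enorm_eq_nnnorm] at hc
    rw [hc]
    gcongr
    have hps : (fun x => (p : ℝ) * S x) = ((p : ℝ)) • S := rfl
    calc eLpNorm (fun x => (p : ℝ) * S x + R x) 2 μ
        ≤ eLpNorm (fun x => (p : ℝ) * S x) 2 μ + eLpNorm R 2 μ := by
          refine eLpNorm_add_le ?_ hRmem.1 one_le_two
          rw [hps]; exact hSmem.1.const_smul _
      _ ≤ (p : ℝ≥0∞) * eLpNorm S 2 μ + eLpNorm R 2 μ := by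
          gcongr
          rw [hps, eLpNorm_const_smul]
          simp
  refine hmain.trans ?_
  calc (N : ℝ≥0∞)⁻¹ * ((p : ℝ≥0∞) * eLpNorm S 2 μ + eLpNorm R 2 μ)
      ≤ (N : ℝ≥0∞)⁻¹ * ((p : ℝ≥0∞) * ((n : ℝ≥0∞) * eLpNorm A 2 μ)
          + (k : ℝ≥0∞) * eLpNorm f 2 μ) := by gcongr
    _ = ((p : ℝ≥0∞) * n / N) * eLpNorm A 2 μ + ((k : ℝ≥0∞) / N) * eLpNorm f 2 μ := by
        rw [mul_add]
        congr 1 <;> rw [ENNReal.div_eq_inv_mul] <;> ring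
    _ ≤ 1 * eLpNorm A 2 μ + ((n : ℝ≥0∞))⁻¹ * eLpNorm f 2 μ := by
        gcongr
        · refine ENNReal.div_le_of_le_mul ?_
          rw [one_mul]
          have : p * n ≤ N := by rw [hN, Nat.mul_comm]; exact Nat.le_add_right _ _
          exact_mod_cast this
        · refine ENNReal.div_le_of_le_mul ?_
          have hkn : (k : ℝ≥0∞) * n ≤ N := by
            have : k * n ≤ N := le_trans (Nat.mul_le_mul_right n hk.le)
              (by rw [hN, Nat.mul_comm]; exact Nat.le_add_right _ _)
            exact_mod_cast this
          rw [← ENNReal.le_div_iff_mul_le (Or.inl (by exact_mod_cast (by omega : ¬ n = 0)))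
            (Or.inl (by simp))] at hkn
          · rwa [ENNReal.div_eq_inv_mul] at hkn
    _ = eLpNorm A 2 μ + eLpNorm f 2 μ / n := by
        rw [one_mul, ENNReal.div_eq_inv_mul]
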